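/- arXiv:1102.2120 — 7 statements merged into one kernel-verified Lean document; each statement's English description precedes it below -/
import Mathlib

section
/- Let f : ℝ → ℝ be differentiable, let τ > 0 and α > β > 0 be constants, and suppose f'(t) ≤ -α f(t) + β · sup_{s ∈ [t-τ, t]} f(s) for all t ≥ t₀. Then there exist γ > 0 and K > 0 such that f(t) ≤ K · exp(-γ (t - t₀)) for all t ≥ t₀. -/
open Real Set Filter Topology

/-- Classical Halanay inequality (Halanay, 1966). -/
theorem halanay_inequality (f : ℝ → ℝ) (t₀ τ α β : ℝ)
    (hf : Differentiable ℝ f) (hτ : 0 < τ) (hβ : 0 < β) (hαβ : β < α)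
    (hineq : ∀ t, t₀ ≤ t →
      deriv f t ≤ -α * f t + β * sSup (f '' Set.Icc (t - τ) t)) :
    ∃ γ > (0:ℝ), ∃ K > (0:ℝ), ∀ t, t₀ ≤ t →
      f t ≤ K * Real.exp (-γ * (t - t₀)) := by
  -- choose γ > 0 with β * exp (γ*τ) + γ < α
  obtain ⟨γ, hγmem, hγ0⟩ : ∃ γ : ℝ, (β * Real.exp (γ * τ) + γ < α) ∧ 0 < γ := by
    have hc : ContinuousAt (fun γ : ℝ => β * Real.exp (γ * τ) + γ) 0 := by fun_prop
    have h1 : ∀ᶠ γ in 𝓝 (0:ℝ), β * Real.exp (γ * τ) + γ < α := by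
      have : (fun γ : ℝ => β * Real.exp (γ * τ) + γ) 0 = β := by simp
      have hmem : Iio α ∈ 𝓝 ((fun γ : ℝ => β * Real.exp (γ * τ) + γ) 0) := by
        rw [this]; exact Iio_mem_nhds hαβ
      exact hc hmem
    have h2 : ∀ᶠ γ in 𝓝[>] (0:ℝ), β * Real.exp (γ * τ) + γ < α :=
      mem_nhdsWithin_of_mem_nhds h1
    obtain ⟨γ, h3, h4⟩ := (h2.and self_mem_nhdsWithin).exists
    exact ⟨γ, h3, h4⟩
  have hγτ : β * Real.exp (γ * τ) < α - γ := by linarith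
  set K : ℝ := max (sSup (f '' Set.Icc (t₀ - τ) t₀)) 1 with hKdef
  have hK : (0:ℝ) < K := lt_of_lt_of_le one_pos (le_max_right _ _)
  have hfc : Continuous f := hf.continuous
  have hbddS : BddAbove (f '' Set.Icc (t₀ - τ) t₀) :=
    (isCompact_Icc.image hfc).bddAbove
  have hfK : ∀ s ∈ Set.Icc (t₀ - τ) t₀, f s ≤ K := fun s hs =>
    (le_csSup hbddS (Set.mem_image_of_mem f hs)).trans (le_max_left _ _)
  refine ⟨γ, hγ0, K, hK, ?_⟩
  -- key strict inequality with K + ε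
  have key : ∀ ε > (0:ℝ), ∀ t, t₀ ≤ t → f t < (K + ε) * Real.exp (-γ * (t - t₀)) := by
    intro ε hε
    by_contra hcon
    push_neg at hcon
    obtain ⟨t, ht, hget⟩ := hcon
    set g : ℝ → ℝ := fun t => (K + ε) * Real.exp (-γ * (t - t₀)) with hgdef
    have hKε : (0:ℝ) < K + ε := by linarith
    have hgpos : ∀ s, 0 < g s := fun s => mul_pos hKε (Real.exp_pos _)
    have hgc : Continuous g := by fun_prop
    have hg' : ∀ s, HasDerivAt g (-γ * g s) s := by
      intro s
      have h1 : HasDerivAt (fun u : ℝ => -γ * (u - t₀)) (-γ) s := by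
        simpa using ((hasDerivAt_id s).sub_const t₀).const_mul (-γ)
      have h2 := (h1.exp).const_mul (K + ε)
      refine h2.congr_deriv ?_
      simp [hgdef]; ring
    set A : Set ℝ := {s | t₀ ≤ s ∧ g s ≤ f s} with hAdef
    have hA_ne : A.Nonempty := ⟨t, ht, hget⟩
    have hA_bdd : BddBelow A := ⟨t₀, fun x hx => hx.1⟩
    have hA_closed : IsClosed A := by
      have : A = Set.Ici t₀ ∩ {s | g s ≤ f s} := by
        ext x; simp [hAdef, Set.mem_setOf_eq, Set.mem_Ici]
      rw [this]
      exact isClosed_Ici.inter (isClosed_le hgc hfc)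
    set t₁ : ℝ := sInf A with ht₁def
    have ht₁A : t₁ ∈ A := hA_closed.csInf_mem hA_ne hA_bdd
    have ht₀t₁ : t₀ < t₁ := by
      rcases lt_or_eq_of_le ht₁A.1 with h | h
      · exact h
      · exfalso
        have h1 : f t₀ ≤ K := hfK t₀ ⟨by linarith, le_refl _⟩
        have h2 : g t₀ = K + ε := by simp [hgdef]
        have h3 : g t₁ ≤ f t₁ := ht₁A.2
        rw [← h] at h3
        rw [h2] at h3
        linarith
    have hlt : ∀ s, t₀ ≤ s → s < t₁ → f s < g s := by
      intro s h1 h2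
      by_contra h3
      push_neg at h3
      have : s ∈ A := ⟨h1, h3⟩
      exact absurd (csInf_le hA_bdd this) (not_le.mpr h2)
    -- f t₁ ≤ g t₁ by left continuity
    have hft₁ : f t₁ ≤ g t₁ := by
      have hne : (𝓝[<] t₁).NeBot := nhdsLT_neBot t₁
      have htend : Tendsto (fun s => f s - g s) (𝓝[<] t₁) (𝓝 (f t₁ - g t₁)) :=
        ((hfc.sub hgc).tendsto t₁).mono_left nhdsWithin_le_nhds
      have hev : ∀ᶠ s in 𝓝[<] t₁, f s - g s ≤ 0 := by
        filter_upwards [Ioo_mem_nhdsLT_of_mem ⟨ht₀t₁, le_refl _⟩] with s hs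
        have := hlt s hs.1.le hs.2
        linarith
      have := le_of_tendsto htend hev
      linarith
    have hle : ∀ s ∈ Set.Icc (t₀ - τ) t₁, f s ≤ g s := by
      intro s hs
      rcases le_or_gt s t₀ with h | h
      · have h1 : f s ≤ K := hfK s ⟨hs.1, h⟩
        have h2 : (1:ℝ) ≤ Real.exp (-γ * (s - t₀)) := by
          apply Real.one_le_exp
          nlinarith
        have : K + ε ≤ (K + ε) * Real.exp (-γ * (s - t₀)) := le_mul_of_one_le_right hKε.le h2
        simp only [hgdef]
        linarith
      · rcases lt_or_eq_of_le hs.2 with h2 | h2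
        · exact (hlt s h.le h2).le
        · rw [h2]; exact hft₁
    -- bound the sup over [t₁ - τ, t₁]
    have hsup : sSup (f '' Set.Icc (t₁ - τ) t₁) ≤ Real.exp (γ * τ) * g t₁ := by
      apply csSup_le
      · exact (Set.nonempty_Icc.mpr (by linarith)).image f
      · rintro y ⟨s, hs, rfl⟩
        have hs' : s ∈ Set.Icc (t₀ - τ) t₁ := ⟨by linarith [hs.1], hs.2⟩
        have h1 : f s ≤ g s := hle s hs'
        have h2 : g s ≤ Real.exp (γ * τ) * g t₁ := by
          simp only [hgdef]
          have h3 : Real.exp (-γ * (s - t₀)) ≤ Real.exp (γ * τ) * Real.exp (-γ * (t₁ - t₀)) := by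
            rw [← Real.exp_add]
            exact Real.exp_le_exp.mpr (by nlinarith [hs.1])
          nlinarith [h3]
        linarith
    -- derivative of φ = f - g at t₁ is nonneg (left max) but strictly negative: contradiction
    have hφ' : HasDerivAt (fun s => f s - g s) (deriv f t₁ - -γ * g t₁) t₁ :=
      ((hf t₁).hasDerivAt).sub (hg' t₁)
    have hnonneg : 0 ≤ deriv f t₁ - -γ * g t₁ := by
      have hW : HasDerivWithinAt (fun s => f s - g s) (deriv f t₁ - -γ * g t₁) (Set.Iio t₁) t₁ :=
        hφ'.hasDerivWithinAt
      rw [hasDerivWithinAt_iff_tendsto_slope] at hW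
      have hdiff : Set.Iio t₁ \ {t₁} = Set.Iio t₁ := by
        apply Set.diff_singleton_eq_self; simp
      rw [hdiff] at hW
      have hne : (𝓝[<] t₁).NeBot := nhdsLT_neBot t₁
      apply ge_of_tendsto hW
      filter_upwards [Ioo_mem_nhdsLT_of_mem ⟨ht₀t₁, le_refl t₁⟩] with x hx
      have h1 : f x - g x ≤ 0 := by linarith [hlt x hx.1.le hx.2]
      have h2 : 0 ≤ f t₁ - g t₁ := by linarith [ht₁A.2]
      have h3 : x - t₁ < 0 := by linarith [hx.2]
      rw [slope_def_field]
      exact div_nonneg_of_nonpos (by linarith) h3.le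
    have hub : deriv f t₁ ≤ -α * g t₁ + β * (Real.exp (γ * τ) * g t₁) := by
      have h1 := hineq t₁ ht₀t₁.le
      have h2 : -α * f t₁ ≤ -α * g t₁ := by nlinarith [ht₁A.2, hαβ, hβ]
      nlinarith [hβ, hsup]
    have hgt : (0:ℝ) < g t₁ := hgpos t₁
    nlinarith [hnonneg, hub, mul_lt_mul_of_pos_right hγτ hgt]
  -- conclude by letting ε → 0
  intro t ht
  have hE : (0:ℝ) < Real.exp (-γ * (t - t₀)) := Real.exp_pos _
  apply le_of_forall_pos_le_add
  intro ε' hε'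
  have h := key (ε' / Real.exp (-γ * (t - t₀))) (div_pos hε' hE) t ht
  have : (K + ε' / Real.exp (-γ * (t - t₀))) * Real.exp (-γ * (t - t₀))
      = K * Real.exp (-γ * (t - t₀)) + ε' := by
    field_simp
  linarith [h, this.le]
end

section
/- Let x : ℝ → ℝ be nonnegative and differentiable on [t₀, ∞), let τ : ℝ → ℝ be nonnegative, continuous and bounded with τ* = sup_t τ(t), and let a, b : ℝ → ℝ be nonnegative, continuous, bounded functions with inf_{t ∈ ℝ} (a(t) - b(t)) = L > 0. If x'(t) ≤ -a(t) x(t) + b(t) · sup_{s ∈ [t - τ(t), t]} x(s) for all t ≥ t₀, then there exists λ > 0 such that x(t) ≤ (sup_{s ∈ [t₀ - τ*, t₀]} x(s)) · exp(-λ (t - t₀)) for all t > t₀. -/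
open Set Filter Topology

/-- Mohamad–Gopalsamy generalization of the Halanay inequality with
variable coefficients and variable bounded delay. -/
theorem mohamad_gopalsamy_halanay (x a b τ : ℝ → ℝ) (t₀ τstar L : ℝ)
    (hx_nonneg : ∀ t, 0 ≤ x t)
    (hx_diff : ∀ t, t₀ ≤ t → DifferentiableAt ℝ x t)
    (hx_cont : ContinuousOn x (Set.Icc (t₀ - τstar) t₀))
    (hτ_nonneg : ∀ t, 0 ≤ τ t) (hτ_cont : Continuous τ)
    (hτ_bdd : BddAbove (Set.range τ)) (hτstar : τstar = ⨆ t, τ t)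
    (ha_nonneg : ∀ t, 0 ≤ a t) (ha_cont : Continuous a)
    (ha_bdd : BddAbove (Set.range a))
    (hb_nonneg : ∀ t, 0 ≤ b t) (hb_cont : Continuous b)
    (hb_bdd : BddAbove (Set.range b))
    (hL : L = ⨅ t, (a t - b t)) (hLpos : 0 < L)
    (hineq : ∀ t, t₀ ≤ t →
      deriv x t ≤ -a t * x t + b t * sSup (x '' Set.Icc (t - τ t) t)) :
    ∃ lam > (0:ℝ), ∀ t, t₀ < t →
      x t ≤ sSup (x '' Set.Icc (t₀ - τstar) t₀) * Real.exp (-lam * (t - t₀)) := by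
  set K := sSup (x '' Set.Icc (t₀ - τstar) t₀) with hKdef
  set B := ⨆ t, b t with hBdef
  have hτstar_ge : ∀ t, τ t ≤ τstar := fun t => hτstar ▸ le_ciSup hτ_bdd t
  have hτstar0 : 0 ≤ τstar := le_trans (hτ_nonneg 0) (hτstar_ge 0)
  have hBb : ∀ t, b t ≤ B := fun t => le_ciSup hb_bdd t
  have hB0 : 0 ≤ B := le_trans (hb_nonneg 0) (hBb 0)
  have hab : ∀ t, L ≤ a t - b t := by
    intro t
    rw [hL]
    refine ciInf_le ⟨-B, ?_⟩ t
    rintro v ⟨s, rfl⟩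
    have h1 := hBb s; have h2 := ha_nonneg s
    dsimp only
    linarith
  -- choose lam
  obtain ⟨lam, hflam, hlam0⟩ :
      ∃ l, l + B * (Real.exp (l * τstar) - 1) < L ∧ 0 < l := by
    have hc : ContinuousAt (fun l : ℝ => l + B * (Real.exp (l * τstar) - 1)) 0 := by
      fun_prop
    have h0 : (fun l : ℝ => l + B * (Real.exp (l * τstar) - 1)) 0 < L := by
      simpa using hLpos
    have hev : ∀ᶠ l in 𝓝 (0:ℝ), l + B * (Real.exp (l * τstar) - 1) < L :=
      hc.eventually_lt continuousAt_const h0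
    obtain ⟨l, hl1, hl2⟩ :=
      ((hev.filter_mono nhdsWithin_le_nhds).and
        (eventually_mem_nhdsWithin (s := Set.Ioi (0:ℝ)) (a := (0:ℝ)))).exists
    exact ⟨l, hl1, hl2⟩
  have hkey : ∀ t, b t * Real.exp (lam * τstar) < a t - lam := by
    intro t
    have he1 : (1:ℝ) ≤ Real.exp (lam * τstar) :=
      Real.one_le_exp (by positivity)
    have h1 : b t * (Real.exp (lam * τstar) - 1) ≤ B * (Real.exp (lam * τstar) - 1) :=
      mul_le_mul_of_nonneg_right (hBb t) (by linarith)
    have h2 := hab t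
    nlinarith [hb_nonneg t]
  -- facts about K
  have hIccne : (Set.Icc (t₀ - τstar) t₀).Nonempty := ⟨t₀, by constructor <;> linarith⟩
  have hKbdd : BddAbove (x '' Set.Icc (t₀ - τstar) t₀) :=
    (isCompact_Icc.image_of_continuousOn hx_cont).bddAbove
  have hxK : ∀ s ∈ Set.Icc (t₀ - τstar) t₀, x s ≤ K :=
    fun s hs => le_csSup hKbdd ⟨s, hs, rfl⟩
  have hK0 : 0 ≤ K := (hx_nonneg t₀).trans (hxK t₀ ⟨by linarith, le_refl _⟩)
  have hx_contAt : ∀ t, t₀ ≤ t → ContinuousAt x t := fun t ht =>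
    (hx_diff t ht).continuousAt
  -- main claim with room ε
  have main : ∀ ε > (0:ℝ), ∀ t, t₀ ≤ t →
      x t ≤ (K + ε) * Real.exp (-lam * (t - t₀)) := by
    intro ε hε
    by_contra hcon
    push_neg at hcon
    set y : ℝ → ℝ := fun t => (K + ε) * Real.exp (-lam * (t - t₀)) with hydef
    have hy_pos : ∀ t, 0 < y t := fun t => by positivity
    have hy_deriv : ∀ t, HasDerivAt y (-lam * y t) t := by
      intro t
      have h1 : HasDerivAt (fun t : ℝ => -lam * (t - t₀)) (-lam) t := by
        simpa using ((hasDerivAt_id t).sub_const t₀).const_mul (-lam)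
      have := (h1.exp).const_mul (K + ε)
      refine this.congr_deriv ?_
      show _ = -lam * ((K + ε) * Real.exp (-lam * (t - t₀)))
      ring
    set S : Set ℝ := {t | t₀ ≤ t ∧ y t < x t} with hSdef
    have hS_ne : S.Nonempty := by
      obtain ⟨t, ht0, htx⟩ := hcon
      exact ⟨t, ht0, htx⟩
    have hS_bdd : BddBelow S := ⟨t₀, fun s hs => hs.1⟩
    set t₁ := sInf S with ht₁def
    -- S is bounded away from t₀
    have hz0 : x t₀ - y t₀ < 0 := by
      have : x t₀ ≤ K := hxK t₀ ⟨by linarith, le_refl _⟩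
      have : y t₀ = K + ε := by simp [hydef]
      linarith [hxK t₀ ⟨by linarith, le_refl _⟩, this]
    have hcz : ContinuousAt (fun t => x t - y t) t₀ :=
      (hx_contAt t₀ le_rfl).sub (hy_deriv t₀).continuousAt
    have hev0 : ∀ᶠ t in 𝓝 t₀, x t - y t < 0 :=
      hcz.eventually_lt continuousAt_const (by simpa using hz0)
    obtain ⟨δ, hδ0, hδ⟩ := Metric.eventually_nhds_iff.mp hev0
    have hS_far : ∀ s ∈ S, t₀ + δ / 2 ≤ s := by
      intro s hs
      by_contra hlt
      push_neg at hlt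
      have h1 : |s - t₀| < δ := by
        rw [abs_lt]; constructor <;> [linarith [hs.1]; linarith]
      have := hδ (by simpa [Real.dist_eq] using h1)
      have := hs.2
      linarith
    have ht₁_gt : t₀ < t₁ := lt_of_lt_of_le (by linarith) (le_csInf hS_ne hS_far)
    have ht₁_mem : ∀ s ∈ S, t₁ ≤ s := fun s hs => csInf_le hS_bdd hs
    -- x ≤ y strictly before t₁, above t₀ - τstar
    have h_before : ∀ s, t₀ - τstar ≤ s → s < t₁ → x s ≤ y s := by
      intro s hs1 hs2
      rcases le_or_gt s t₀ with h | h
      · have hx1 : x s ≤ K := hxK s ⟨hs1, h⟩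
        have he : (1:ℝ) ≤ Real.exp (-lam * (s - t₀)) := by
          apply Real.one_le_exp; nlinarith
        have : K + ε ≤ (K + ε) * Real.exp (-lam * (s - t₀)) :=
          le_mul_of_one_le_right (by linarith) he
        simpa [hydef] using le_trans (by linarith : x s ≤ K + ε) this
      · by_contra hlt
        push_neg at hlt
        have : s ∈ S := ⟨h.le, hlt⟩
        exact absurd (ht₁_mem s this) (not_le.mpr hs2)
    -- z t₁ ≥ 0 via closure of S
    have hne : (𝓝[S] t₁).NeBot := by
      rw [← mem_closure_iff_nhdsWithin_neBot, Metric.mem_closure_iff]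
      intro r hr
      obtain ⟨s, hsS, hslt⟩ := (Real.lt_sInf_add_pos hS_ne hr)
      refine ⟨s, hsS, ?_⟩
      have h1 : t₁ ≤ s := ht₁_mem s hsS
      rw [Real.dist_eq, abs_of_nonpos (by linarith)]
      linarith
    have hz_cont : ContinuousAt (fun t => x t - y t) t₁ :=
      (hx_contAt t₁ ht₁_gt.le).sub (hy_deriv t₁).continuousAt
    have hz1_ge : 0 ≤ x t₁ - y t₁ := by
      have htt : Filter.Tendsto (fun t => x t - y t) (𝓝[S] t₁) (𝓝 (x t₁ - y t₁)) :=
        hz_cont.continuousWithinAt.tendsto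
      refine ge_of_tendsto htt (eventually_nhdsWithin_of_forall ?_)
      intro s hs
      exact (sub_pos.mpr hs.2).le
    have hz1_le : x t₁ - y t₁ ≤ 0 := by
      by_contra hpos
      push_neg at hpos
      have hev : ∀ᶠ t in 𝓝 t₁, 0 < x t - y t :=
        (continuousAt_const).eventually_lt hz_cont (by simpa using hpos)
      obtain ⟨δ', hδ'0, hδ'⟩ := Metric.eventually_nhds_iff.mp hev
      have hmin0 : 0 < min (δ' / 2) ((t₁ - t₀) / 2) :=
        lt_min (by linarith) (by linarith)
      have hml := min_le_left (δ' / 2) ((t₁ - t₀) / 2)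
      have hmr := min_le_right (δ' / 2) ((t₁ - t₀) / 2)
      have hs_dist : dist (t₁ - min (δ' / 2) ((t₁ - t₀) / 2)) t₁ < δ' := by
        rw [Real.dist_eq, abs_of_nonpos (by linarith)]
        linarith
      have hmem : (t₁ - min (δ' / 2) ((t₁ - t₀) / 2)) ∈ S :=
        ⟨by linarith, by linarith [hδ' hs_dist]⟩
      have := ht₁_mem _ hmem
      linarith
    have hxy1 : x t₁ = y t₁ := by linarith
    -- bound the delayed sup at t₁
    have hsub_int : ∀ s ∈ Set.Icc (t₁ - τ t₁) t₁, x s ≤ y t₁ * Real.exp (lam * τstar) := by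
      intro s hs
      have hs1 : t₀ - τstar ≤ s := by
        have := hτstar_ge t₁; have := hs.1; linarith
      have hxy : x s ≤ y s := by
        rcases lt_or_eq_of_le hs.2 with h | h
        · exact h_before s hs1 h
        · rw [h, hxy1]
      have hyb : y s ≤ y t₁ * Real.exp (lam * τstar) := by
        have hse : -lam * (s - t₀) ≤ -lam * (t₁ - t₀) + lam * τstar := by
          have h1 : t₁ - s ≤ τ t₁ := by linarith [hs.1]
          nlinarith [hτstar_ge t₁]
        calc y s = (K + ε) * Real.exp (-lam * (s - t₀)) := rfl
          _ ≤ (K + ε) * Real.exp (-lam * (t₁ - t₀) + lam * τstar) := by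
              apply mul_le_mul_of_nonneg_left (Real.exp_le_exp.mpr hse) (by linarith)
          _ = y t₁ * Real.exp (lam * τstar) := by
              simp [hydef, Real.exp_add]; ring
      linarith
    have hsup : sSup (x '' Set.Icc (t₁ - τ t₁) t₁) ≤ y t₁ * Real.exp (lam * τstar) := by
      apply Real.sSup_le
      · rintro v ⟨s, hs, rfl⟩; exact hsub_int s hs
      · positivity
    -- derivative contradiction
    have hderiv_le : deriv x t₁ - (-lam * y t₁) < 0 := by
      have h1 := hineq t₁ ht₁_gt.le
      have h2 : b t₁ * sSup (x '' Set.Icc (t₁ - τ t₁) t₁)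
          ≤ b t₁ * (y t₁ * Real.exp (lam * τstar)) :=
        mul_le_mul_of_nonneg_left hsup (hb_nonneg t₁)
      have h3 : b t₁ * Real.exp (lam * τstar) < a t₁ - lam := hkey t₁
      have h4 : 0 < y t₁ := hy_pos t₁
      rw [hxy1] at h1
      have h5 : b t₁ * (y t₁ * Real.exp (lam * τstar))
          < a t₁ * y t₁ - lam * y t₁ := by
        nlinarith [mul_lt_mul_of_pos_right h3 h4]
      linarith
    have hz_deriv : HasDerivAt (fun t => x t - y t) (deriv x t₁ - (-lam * y t₁)) t₁ :=
      ((hx_diff t₁ ht₁_gt.le).hasDerivAt).sub (hy_deriv t₁)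
    have hsubne : S ⊆ {t₁}ᶜ := by
      intro s hs hmem
      simp only [Set.mem_singleton_iff] at hmem
      subst hmem
      have := hs.2
      linarith [hxy1.le]
    have htend : Tendsto (slope (fun t => x t - y t) t₁) (𝓝[S] t₁)
        (𝓝 (deriv x t₁ - (-lam * y t₁))) :=
      (hasDerivAt_iff_tendsto_slope.mp hz_deriv).mono_left
        (nhdsWithin_mono _ hsubne)
    have h0le : 0 ≤ deriv x t₁ - (-lam * y t₁) := by
      refine ge_of_tendsto htend (eventually_nhdsWithin_of_forall ?_)
      intro s hs
      have hslt : t₁ < s := lt_of_le_of_ne (ht₁_mem s hs) (fun h => hsubne hs h.symm)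
      have hz_pos : 0 < x s - y s := sub_pos.mpr hs.2
      rw [slope_def_field]
      have : ((x s - y s) - (x t₁ - y t₁)) / (s - t₁) ≥ 0 := by
        apply div_nonneg (by linarith) (by linarith)
      simpa [div_eq_iff, sub_ne_zero] using this
    linarith
  -- conclude by letting ε → 0
  refine ⟨lam, hlam0, ?_⟩
  intro t ht
  by_contra hcon
  push_neg at hcon
  set E := Real.exp (-lam * (t - t₀)) with hEdef
  have hE0 : 0 < E := Real.exp_pos _
  set ε := (x t - K * E) / (2 * E) with hεdef
  have hε0 : 0 < ε := by
    apply div_pos (by linarith) (by linarith)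
  have := main ε hε0 t ht.le
  have hεE : ε * E = (x t - K * E) / 2 := by
    rw [hεdef, div_mul_eq_mul_div, mul_div_mul_right _ _ hE0.ne']
  rw [show (K + ε) * Real.exp (-lam * (t - t₀)) = K * E + ε * E by rw [← hEdef]; ring] at this
  rw [hεE] at this
  linarith
end

section
/- (Discrete comparison principle) Let h₁ < h₂ < ... < h_r be positive integers with h₀ = 0, let f(t, u, v) be continuous in (u,v) for each t, monotone increasing in v and non-decreasing in u, and let g(u₁,...,u_r) be monotone increasing in each argument. Suppose φ, ψ : ℤ → ℝ satisfy φ(t+1) - φ(t) < f(t, φ(t), g(φ(t-h₁), ..., φ(t-h_r))) and ψ(t+1) - ψ(t) ≥ f(t, ψ(t), g(ψ(t-h₁), ..., ψ(t-h_r))) for all t ∈ [t₀, α) ∩ ℤ, and φ(s) < ψ(s) for all s ∈ [t₀ - h_r, t₀] ∩ ℤ. Then φ(t) < ψ(t) for all t ∈ (t₀, α) ∩ ℤ. -/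
/-- Discrete comparison principle (Proposition 3.1 on `T = ℤ`). -/
theorem discrete_comparison_principle (r : ℕ) (hr : 0 < r)
    (d : Fin r → ℤ) (hd_mono : StrictMono d) (hd_pos : ∀ i, 0 < d i)
    (f : ℤ → ℝ → ℝ → ℝ) (g : (Fin r → ℝ) → ℝ)
    (hf_cont : ∀ t, Continuous (fun p : ℝ × ℝ => f t p.1 p.2))
    (hf_incr_v : ∀ t u, StrictMono (f t u))
    (hf_nondecr_u : ∀ t v, Monotone (fun u => f t u v))
    (hg_mono : ∀ u v : Fin r → ℝ, (∀ i, u i ≤ v i) → g u ≤ g v)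
    (t₀ α : ℤ) (φ ψ : ℤ → ℝ)
    (hφ : ∀ t ∈ Finset.Ico t₀ α,
      φ (t + 1) - φ t < f t (φ t) (g fun i => φ (t - d i)))
    (hψ : ∀ t ∈ Finset.Ico t₀ α,
      f t (ψ t) (g fun i => ψ (t - d i)) ≤ ψ (t + 1) - ψ t)
    (hinit : ∀ s ∈ Finset.Icc (t₀ - d ⟨r - 1, by omega⟩) t₀, φ s < ψ s) :
    ∀ t ∈ Finset.Ioo t₀ α, φ t < ψ t := by
  set D := d ⟨r - 1, by omega⟩ with hD
  have hdle : ∀ i, d i ≤ D := fun i =>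
    hd_mono.monotone (by apply Fin.le_def.mpr; simp; omega)
  have key : ∀ t, t₀ ≤ t → t ≤ α → ∀ s, t₀ - D ≤ s → s ≤ t → φ s < ψ s := by
    intro t
    refine Int.le_induction (m := t₀) (motive := fun t _ => t ≤ α → ∀ s, t₀ - D ≤ s → s ≤ t → φ s < ψ s) ?_ ?_ t
    · intro _ s hs1 hs2
      exact hinit s (Finset.mem_Icc.mpr ⟨hs1, hs2⟩)
    · intro t ht ih hta s hs1 hs2
      rcases lt_or_eq_of_le hs2 with h | h
      · exact ih (by omega) s hs1 (by omega)
      · subst h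
        have hmem : t ∈ Finset.Ico t₀ α := Finset.mem_Ico.mpr ⟨ht, by omega⟩
        have h1 := hφ t hmem
        have h2 := hψ t hmem
        have hφψt : φ t < ψ t := ih (by omega) t (by have := hd_pos ⟨r - 1, by omega⟩; omega) le_rfl
        have hG : g (fun i => φ (t - d i)) ≤ g (fun i => ψ (t - d i)) := by
          apply hg_mono
          intro i
          exact le_of_lt (ih (by omega) _ (by have := hdle i; omega)
            (by have := hd_pos i; omega))
        have hff : f t (φ t) (g fun i => φ (t - d i)) ≤ f t (ψ t) (g fun i => ψ (t - d i)) :=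
          le_trans (hf_nondecr_u t _ hφψt.le) ((hf_incr_v t (ψ t)).monotone hG)
        linarith
  intro t ht
  obtain ⟨h1, h2⟩ := Finset.mem_Ioo.mp ht
  exact key t (by omega) (by omega) t
    (by have := hd_pos ⟨r - 1, by omega⟩; omega) le_rfl
end

section
/- Let p, q be real constants with 0 < q < p ≤ 1, and let τ be a positive integer. Suppose x : [-τ, ∞) ∩ ℤ → ℝ satisfies x(t+1) - x(t) ≤ -p·x(t) + q · max_{s ∈ [t-τ, t] ∩ ℤ} x(s) for all t ∈ ℕ. Then there exist M₀ > 0 and λ ∈ (-1, 0) such that x(t) ≤ M₀ (1 + λ)^t for all t ∈ ℕ. -/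
/-- Discrete sup-type Halanay inequality (Theorem 3.2 on `T = ℤ`,
constant coefficients, `ℓ = 1`). -/
theorem discrete_sup_halanay (p q : ℝ) (hq : 0 < q) (hqp : q < p) (hp : p ≤ 1)
    (τ : ℕ) (hτ : 1 ≤ τ) (x : ℤ → ℝ)
    (hx : ∀ t : ℕ, x (t + 1) - x t ≤
      -p * x t + q * sSup (x '' Set.Icc ((t : ℤ) - (τ : ℤ)) (t : ℤ))) :
    ∃ M₀ > (0 : ℝ), ∃ lam ∈ Set.Ioo (-1 : ℝ) 0,
      ∀ t : ℕ, x t ≤ M₀ * (1 + lam) ^ t := by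
  -- choose a ∈ (0,1) with a^(τ+1) - (1-p)*a^τ - q > 0
  set f : ℝ → ℝ := fun a => a ^ (τ + 1) - (1 - p) * a ^ τ - q with hf
  have hfc : ContinuousAt f 1 := by fun_prop
  have hf1 : f 1 = p - q := by simp [hf]
  have hpos : 0 < p - q := by linarith
  have := hfc (Metric.isOpen_ball.mem_nhds (by
    show dist (f 1) (f 1) < p - q
    simpa using hpos))
  rcases Metric.mem_nhds_iff.mp this with ⟨δ, hδ, hball⟩
  set a : ℝ := 1 - min δ 1 / 2 with ha
  have hmin : 0 < min δ 1 := lt_min hδ one_pos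
  have ha0 : 0 < a := by
    have : min δ 1 ≤ 1 := min_le_right _ _
    simp only [ha]; linarith
  have ha1 : a < 1 := by simp only [ha]; linarith
  have hfa : 0 < f a := by
    have : a ∈ Metric.ball 1 δ := by
      simp only [Metric.mem_ball, ha, Real.dist_eq]
      have h1 : min δ 1 ≤ δ := min_le_left _ _
      rw [abs_of_nonpos (by linarith)]
      linarith
    have h2 := hball this
    simp only [Set.mem_preimage, Metric.mem_ball, Real.dist_eq, hf1] at h2
    have h3 := abs_lt.mp h2
    linarith [h3.1]
  -- key inequality: (1-p) + q * a^(-τ) ≤ a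
  have hτpos : (0:ℝ) < a ^ τ := pow_pos ha0 τ
  have hkey : (1 - p) * a ^ τ + q ≤ a ^ (τ + 1) := by
    have : 0 < a ^ (τ + 1) - (1 - p) * a ^ τ - q := hfa
    linarith
  -- M₀
  have hfin : (x '' Set.Icc (-(τ:ℤ)) 0).Finite := (Set.finite_Icc _ _).image x
  have hne : (x '' Set.Icc (-(τ:ℤ)) 0).Nonempty :=
    ⟨x 0, Set.mem_image_of_mem x (by simp [Set.mem_Icc])⟩
  set m : ℝ := sSup (x '' Set.Icc (-(τ:ℤ)) 0) with hm
  set M₀ : ℝ := max m 1 with hM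
  have hM1 : (1:ℝ) ≤ M₀ := le_max_right _ _
  have hM0 : 0 < M₀ := lt_of_lt_of_le one_pos hM1
  refine ⟨M₀, hM0, a - 1, ⟨by linarith, by linarith⟩, ?_⟩
  have hbase : ∀ s : ℤ, -(τ:ℤ) ≤ s → s ≤ 0 → x s ≤ M₀ * a ^ s := by
    intro s h1 h2
    have hxs : x s ≤ m := le_csSup hfin.bddAbove
      (Set.mem_image_of_mem x (Set.mem_Icc.mpr ⟨h1, h2⟩))
    have h1a : (1:ℝ) ≤ a ^ s := by
      have := zpow_le_zpow_right_of_le_one₀ ha0 ha1.le h2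
      simpa using this
    calc x s ≤ m := hxs
    _ ≤ M₀ := le_max_left _ _
    _ = M₀ * 1 := (mul_one _).symm
    _ ≤ M₀ * a ^ s := by
        exact mul_le_mul_of_nonneg_left h1a hM0.le
  -- main induction
  have main : ∀ t : ℕ, ∀ s : ℤ, -(τ:ℤ) ≤ s → s ≤ (t:ℤ) → x s ≤ M₀ * a ^ s := by
    intro t
    induction t with
    | zero => intro s h1 h2; exact hbase s h1 (by exact_mod_cast h2)
    | succ n ih =>
      intro s h1 h2
      rcases lt_or_eq_of_le h2 with h | h
      · exact ih s h1 (by omega)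
      · subst h
        have hrec := hx n
        have hsup : sSup (x '' Set.Icc ((n:ℤ) - (τ:ℤ)) (n:ℤ)) ≤ M₀ * a ^ ((n:ℤ) - τ) := by
          apply csSup_le
          · exact ⟨x n, Set.mem_image_of_mem x (by simp [Set.mem_Icc])⟩
          · rintro y ⟨s, hs, rfl⟩
            rw [Set.mem_Icc] at hs
            have hxb : x s ≤ M₀ * a ^ s := ih s (by omega) hs.2
            have : a ^ s ≤ a ^ ((n:ℤ) - τ) :=
              zpow_le_zpow_right_of_le_one₀ ha0 ha1.le hs.1
            calc x s ≤ M₀ * a ^ s := hxb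
            _ ≤ M₀ * a ^ ((n:ℤ) - τ) := mul_le_mul_of_nonneg_left this hM0.le
        have hxn : x n ≤ M₀ * a ^ (n:ℤ) := ih n (by omega) le_rfl
        have h1p : (0:ℝ) ≤ 1 - p := by linarith
        have step : x ((n:ℤ) + 1) ≤ (1 - p) * (M₀ * a ^ (n:ℤ)) + q * (M₀ * a ^ ((n:ℤ) - τ)) := by
          have := hx n
          nlinarith [mul_le_mul_of_nonneg_left hsup hq.le]
        have hzpos : (0:ℝ) < a ^ ((n:ℤ) - τ) := zpow_pos ha0 _
        have hfact : a ^ (n:ℤ) = a ^ ((n:ℤ) - τ) * a ^ τ := by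
          rw [← zpow_natCast a τ, ← zpow_add₀ ha0.ne']
          ring_nf
        have key2 : (1 - p) * (M₀ * a ^ (n:ℤ)) + q * (M₀ * a ^ ((n:ℤ) - τ))
            ≤ M₀ * a ^ ((n:ℤ) + 1) := by
          have hNp1 : a ^ ((n:ℤ) + 1) = a ^ ((n:ℤ) - τ) * a ^ (τ + 1) := by
            rw [← zpow_natCast a (τ+1), ← zpow_add₀ ha0.ne']
            congr 1; push_cast; ring
          rw [hfact, hNp1]
          have := mul_le_mul_of_nonneg_left hkey (mul_nonneg hM0.le hzpos.le)
          nlinarith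
        push_cast
        exact le_trans step key2
  intro t
  have := main t t (by omega) le_rfl
  have heq : (1 : ℝ) + (a - 1) = a := by ring
  rw [heq]
  calc x t ≤ M₀ * a ^ (t:ℤ) := this
  _ = M₀ * a ^ t := by rw [zpow_natCast]
end

section
/- (Discrete global stability via Halanay) Let 0 = h₀ < h₁ < ... < h_r be integers, p and q₀,...,q_r constants with 0 < p < 1, q_i ≥ 0, q_r > 0 and Σ_{i=0}^r q_i < p. Suppose F : ℕ × ℝ^{r+1} → ℝ satisfies |F(t, x₀, x₁, ..., x_r)| ≤ Σ_{i=0}^r q_i |x_i| for all arguments. Then every solution x of x(t+1) - x(t) = -p·x(t) + F(t, x(t), x(t-h₁), ..., x(t-h_r)) satisfies |x(t)| → 0 as t → ∞; more precisely there exist M₀ > 1 and λ ∈ (-1, 0) such that |x(t)| ≤ M₀ (1+λ)^t for all t ∈ ℕ. -/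
open Filter in
/-- Discrete global stability via the Halanay inequality
(Theorem 4.1 on `T = ℤ` with constant coefficients and `ℓ = 1`). -/
theorem discrete_global_stability (r : ℕ)
    (d : Fin (r + 1) → ℤ) (hd0 : d 0 = 0) (hd_mono : StrictMono d)
    (p : ℝ) (hp : 0 < p ∧ p < 1)
    (q : Fin (r + 1) → ℝ) (hq_nonneg : ∀ i, 0 ≤ q i)
    (hqr : 0 < q (Fin.last r)) (hsum : ∑ i, q i < p)
    (F : ℕ → (Fin (r + 1) → ℝ) → ℝ)
    (hF : ∀ (t : ℕ) (v : Fin (r + 1) → ℝ), |F t v| ≤ ∑ i, q i * |v i|)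
    (x : ℤ → ℝ)
    (hx : ∀ t : ℕ, x ((t : ℤ) + 1) - x t =
      -p * x t + F t (fun i => x ((t : ℤ) - d i))) :
    Tendsto (fun t : ℕ => |x t|) atTop (nhds 0) ∧
    ∃ M₀ > (1 : ℝ), ∃ lam ∈ Set.Ioo (-1 : ℝ) 0,
      ∀ t : ℕ, |x t| ≤ M₀ * (1 + lam) ^ t := by
  obtain ⟨hp0, hp1⟩ := hp
  set Q : ℝ := ∑ i, q i with hQdef
  have hQ0 : 0 ≤ Q := Finset.sum_nonneg fun i _ => hq_nonneg i
  have hd_nonneg : ∀ i, (0:ℤ) ≤ d i := fun i => hd0 ▸ hd_mono.monotone (Fin.zero_le i)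
  set H : ℕ := (d (Fin.last r)).toNat with hHdef
  have hH : (H : ℤ) = d (Fin.last r) := Int.toNat_of_nonneg (hd_nonneg _)
  have hdle : ∀ i, d i ≤ (H:ℤ) := fun i => hH ▸ hd_mono.monotone (Fin.le_last i)
  set a : ℝ := 1 - p + Q with hadef
  have ha0 : 0 < a := by simp only [hadef]; linarith
  have ha1 : a < 1 := by simp only [hadef]; linarith
  set μ : ℝ := a ^ (((H+1 : ℕ) : ℝ))⁻¹ with hμdef
  have hμ0 : 0 < μ := Real.rpow_pos_of_pos ha0 _
  have hμ1 : μ < 1 := Real.rpow_lt_one ha0.le ha1 (by positivity)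
  have hμpow : μ ^ (H+1) = a := Real.rpow_inv_natCast_pow ha0.le (by omega)
  have hmono : ∀ m n : ℤ, m ≤ n → μ ^ n ≤ μ ^ m := fun m n hmn =>
    zpow_le_zpow_right_of_le_one₀ hμ0 hμ1.le hmn
  -- the key inequality
  have key : ∀ n : ℕ, (1-p) * μ ^ (n:ℤ) + ∑ i, q i * μ ^ ((n:ℤ) - d i) ≤ μ ^ ((n:ℤ)+1) := by
    intro n
    have h1 : (1-p) * μ ^ (n:ℤ) ≤ (1-p) * μ ^ ((n:ℤ) - H) :=
      mul_le_mul_of_nonneg_left (hmono _ _ (by omega)) (by linarith)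
    have h2 : ∑ i, q i * μ ^ ((n:ℤ) - d i) ≤ ∑ i, q i * μ ^ ((n:ℤ) - H) := by
      apply Finset.sum_le_sum
      intro i _
      exact mul_le_mul_of_nonneg_left (hmono _ _ (by have := hdle i; omega)) (hq_nonneg i)
    have h3 : ∑ i, q i * μ ^ ((n:ℤ) - H) = Q * μ ^ ((n:ℤ) - H) := by
      rw [← Finset.sum_mul]
    have h4 : (1-p) * μ ^ ((n:ℤ) - H) + Q * μ ^ ((n:ℤ) - H) = a * μ ^ ((n:ℤ) - H) := by
      ring
    have h5 : a * μ ^ ((n:ℤ) - H) = μ ^ ((n:ℤ)+1) := by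
      rw [← hμpow, ← zpow_natCast μ (H+1), ← zpow_add₀ (ne_of_gt hμ0)]
      congr 1
      push_cast
      ring
    linarith
  -- the constant M
  set M : ℝ := 2 + ∑ k ∈ Finset.range (H+1), |x ((k:ℤ) - H)| * μ ^ (-((k:ℤ) - H)) with hMdef
  have hsum_nonneg : (0:ℝ) ≤ ∑ k ∈ Finset.range (H+1), |x ((k:ℤ) - H)| * μ ^ (-((k:ℤ) - H)) :=
    Finset.sum_nonneg fun k _ => mul_nonneg (abs_nonneg _) (zpow_pos hμ0 _).le
  have hM1 : 1 < M := by simp only [hMdef]; linarith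
  have hM0 : 0 < M := by linarith
  -- base case
  have base : ∀ s : ℤ, -(H:ℤ) ≤ s → s ≤ 0 → |x s| ≤ M * μ ^ s := by
    intro s hs1 hs2
    have hk : ∃ k ∈ Finset.range (H+1), (k:ℤ) - H = s := by
      refine ⟨(s + H).toNat, ?_, ?_⟩
      · simp only [Finset.mem_range]; omega
      · omega
    obtain ⟨k, hk1, hk2⟩ := hk
    have hterm : |x s| * μ ^ (-s) ≤ M := by
      have := Finset.single_le_sum
        (f := fun k : ℕ => |x ((k:ℤ) - H)| * μ ^ (-((k:ℤ) - H)))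
        (s := Finset.range (H+1))
        (fun j _ => mul_nonneg (abs_nonneg _) (zpow_pos hμ0 _).le) hk1
      rw [hk2] at this
      simp only [hMdef]
      linarith
    calc |x s| = (|x s| * μ ^ (-s)) * μ ^ s := by
          rw [mul_assoc, ← zpow_add₀ (ne_of_gt hμ0)]; simp
      _ ≤ M * μ ^ s := mul_le_mul_of_nonneg_right hterm (zpow_pos hμ0 _).le
  -- main induction
  have main : ∀ n : ℕ, ∀ s : ℤ, -(H:ℤ) ≤ s → s ≤ n → |x s| ≤ M * μ ^ s := by
    intro n
    induction n with
    | zero => intro s hs1 hs2; exact base s hs1 (by exact_mod_cast hs2)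
    | succ n ih =>
      intro s hs1 hs2
      by_cases hcase : s ≤ n
      · exact ih s hs1 hcase
      · have hseq : s = (n:ℤ) + 1 := by push_cast at hs2 ⊢; omega
        subst hseq
        have hrec := hx n
        have hxval : x ((n:ℤ) + 1) = (1-p) * x n + F n (fun i => x ((n:ℤ) - d i)) := by
          linarith
        have hb : |x ((n:ℤ)+1)| ≤ (1-p) * |x n| + ∑ i, q i * |x ((n:ℤ) - d i)| := by
          rw [hxval]
          calc |(1-p) * x n + F n (fun i => x ((n:ℤ) - d i))|
              ≤ |(1-p) * x n| + |F n (fun i => x ((n:ℤ) - d i))| := abs_add_le _ _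
            _ ≤ (1-p) * |x n| + ∑ i, q i * |x ((n:ℤ) - d i)| := by
                have := hF n (fun i => x ((n:ℤ) - d i))
                rw [abs_mul, abs_of_nonneg (by linarith : (0:ℝ) ≤ 1 - p)]
                exact add_le_add le_rfl this
        have hxn : |x n| ≤ M * μ ^ (n:ℤ) := ih n (by omega) le_rfl
        have hterms : ∑ i, q i * |x ((n:ℤ) - d i)| ≤ ∑ i, q i * (M * μ ^ ((n:ℤ) - d i)) := by
          apply Finset.sum_le_sum
          intro i _
          refine mul_le_mul_of_nonneg_left ?_ (hq_nonneg i)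
          exact ih ((n:ℤ) - d i) (by have := hdle i; omega) (by have := hd_nonneg i; omega)
        have hfinal : (1-p) * (M * μ ^ (n:ℤ)) + ∑ i, q i * (M * μ ^ ((n:ℤ) - d i))
            ≤ M * μ ^ ((n:ℤ)+1) := by
          have hk := key n
          have : (1-p) * (M * μ ^ (n:ℤ)) + ∑ i, q i * (M * μ ^ ((n:ℤ) - d i))
              = M * ((1-p) * μ ^ (n:ℤ) + ∑ i, q i * μ ^ ((n:ℤ) - d i)) := by
            rw [mul_add, Finset.mul_sum]
            congr 1
            · ring
            · apply Finset.sum_congr rfl; intro i _; ring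
          rw [this]
          exact mul_le_mul_of_nonneg_left hk hM0.le
        have h6 : (1-p) * |x n| ≤ (1-p) * (M * μ ^ (n:ℤ)) :=
          mul_le_mul_of_nonneg_left hxn (by linarith)
        linarith
  -- conclusion
  have bound : ∀ t : ℕ, |x t| ≤ M * μ ^ t := by
    intro t
    have := main t t (by omega) le_rfl
    rwa [zpow_natCast] at this
  constructor
  · apply squeeze_zero (fun t => abs_nonneg _) bound
    have : Tendsto (fun t : ℕ => M * μ ^ t) atTop (nhds (M * 0)) :=
      (tendsto_pow_atTop_nhds_zero_of_lt_one hμ0.le hμ1).const_mul M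
    simpa using this
  · refine ⟨M, hM1, μ - 1, ⟨by linarith, by linarith⟩, ?_⟩
    intro t
    have := bound t
    simpa using this
end

section
/- (Weighted-geometric-mean Halanay, discrete constant case) Let 0 = h₀ < h₁ < ... < h_r be integers, α₀, ..., α_r > 0 with Σ_{i=0}^r α_i = 1, and p, β₀, ..., β_r constants with 0 < p ≤ 1, β_i > 0, and Π_{i=0}^r β_i < p. Suppose x : [-h_r, ∞) ∩ ℤ → ℝ is positive and satisfies x(t+1) - x(t) ≤ -p·x(t) + Π_{i=0}^r β_i · x(t-h_i)^{α_i} for all t ∈ ℕ. Then there exist L₀ > 0 and γ ∈ (-1, 0) such that x(t) ≤ L₀ (1+γ)^t for all t ∈ ℕ. -/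
open Real in
/-- Weighted-geometric-mean Halanay inequality, discrete constant case
(Theorem 3.3 on `T = ℤ`). -/
theorem discrete_geometric_halanay (r : ℕ)
    (h : Fin (r + 1) → ℕ) (hh0 : h 0 = 0) (hh_mono : StrictMono h)
    (α : Fin (r + 1) → ℝ) (hα : ∀ i, 0 < α i) (hαsum : ∑ i, α i = 1)
    (p : ℝ) (hp : 0 < p ∧ p ≤ 1)
    (β : Fin (r + 1) → ℝ) (hβ : ∀ i, 0 < β i)
    (hprod : ∏ i, β i < p)
    (x : ℤ → ℝ) (hx_pos : ∀ s : ℤ, 0 < x s)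
    (hx : ∀ t : ℕ, x (t + 1) - x t ≤
      -p * x t + ∏ i, β i * (x ((t : ℤ) - (h i : ℤ))) ^ (α i)) :
    ∃ L₀ > (0 : ℝ), ∃ γ ∈ Set.Ioo (-1 : ℝ) 0,
      ∀ t : ℕ, x t ≤ L₀ * (1 + γ) ^ t := by
  obtain ⟨hp0, hp1⟩ := hp
  set B := ∏ i, β i with hB
  have hB0 : 0 < B := Finset.prod_pos fun i _ => hβ i
  set hr : ℕ := h (Fin.last r) with hhr
  have hhle : ∀ i, h i ≤ hr := fun i => hh_mono.monotone (Fin.le_last i)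
  -- choose a decay rate l ∈ (0,1) with (1-p) + B * l^(-hr) ≤ l
  have hcont : ContinuousAt (fun l : ℝ => l - ((1 - p) + B * l ^ (-(hr:ℝ)))) 1 := by
    have h1 : ContinuousAt (fun l : ℝ => l ^ (-(hr:ℝ))) 1 :=
      Real.continuousAt_rpow_const 1 _ (Or.inl one_ne_zero)
    exact continuousAt_id.sub (continuousAt_const.add (continuousAt_const.mul h1))
  obtain ⟨δ, hδ0, hδ⟩ := Metric.continuousAt_iff.mp hcont (p - B) (by linarith)
  set l := max (1/2 : ℝ) (1 - δ/2) with hldef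
  have hl0 : (0:ℝ) < l := lt_of_lt_of_le (by norm_num) (le_max_left _ _)
  have hl1 : l < 1 := max_lt (by norm_num) (by linarith)
  have hld : dist l 1 < δ := by
    rw [Real.dist_eq, abs_sub_lt_iff]
    have := le_max_right (1/2 : ℝ) (1 - δ/2)
    constructor <;> linarith
  have hkey : (1 - p) + B * l ^ (-(hr:ℝ)) ≤ l := by
    have h2 := hδ hld
    rw [Real.dist_eq] at h2
    simp only [Real.one_rpow, mul_one] at h2
    have := abs_lt.mp h2
    linarith [this.1]
  -- initial bound
  have hne : (Finset.Icc (-(hr:ℤ)) 0).Nonempty := ⟨0, by simp⟩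
  set L := (Finset.Icc (-(hr:ℤ)) 0).sup' hne (fun s => x s * l ^ (-(s:ℝ))) with hLdef
  have hL0 : 0 < L := by
    have h0 := Finset.le_sup' (fun s : ℤ => x s * l ^ (-(s:ℝ)))
      (show (0:ℤ) ∈ Finset.Icc (-(hr:ℤ)) 0 by simp)
    have hx0 := hx_pos 0
    simp only [Int.cast_zero, neg_zero, Real.rpow_zero, mul_one] at h0
    linarith
  -- the key induction
  have key : ∀ t : ℕ, ∀ s : ℤ, -(hr:ℤ) ≤ s → s ≤ (t:ℤ) → x s ≤ L * l ^ (s:ℝ) := by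
    intro t
    induction t with
    | zero =>
      intro s hs1 hs2
      have hmem : s ∈ Finset.Icc (-(hr:ℤ)) 0 := Finset.mem_Icc.mpr ⟨hs1, by exact_mod_cast hs2⟩
      have h1 := Finset.le_sup' (fun s : ℤ => x s * l ^ (-(s:ℝ))) hmem
      have h2 : (0:ℝ) < l ^ (s:ℝ) := Real.rpow_pos_of_pos hl0 _
      calc x s = (x s * l ^ (-(s:ℝ))) * l ^ (s:ℝ) := by
            rw [mul_assoc, ← Real.rpow_add hl0]; simp
        _ ≤ L * l ^ (s:ℝ) := mul_le_mul_of_nonneg_right h1 h2.le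
    | succ t ih =>
      intro s hs1 hs2
      rcases lt_or_eq_of_le hs2 with hlt | heq
      · exact ih s hs1 (by push_cast at hlt ⊢; omega)
      · subst heq
        -- bound on x t
        have hxt : x (t:ℤ) ≤ L * l ^ ((t:ℤ):ℝ) := ih t (by omega) le_rfl
        -- bound on the delayed terms
        have hdel : ∀ i, x ((t:ℤ) - (h i : ℤ)) ≤ L * l ^ (((t:ℤ) - (h i : ℤ) : ℤ):ℝ) := by
          intro i
          exact ih _ (by have := hhle i; omega) (by omega)
        -- bound the product
        have hprod1 : ∏ i, β i * (x ((t:ℤ) - (h i : ℤ))) ^ (α i)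
            ≤ ∏ i, β i * (L * l ^ (((t:ℤ) - (h i : ℤ) : ℤ):ℝ)) ^ (α i) := by
          apply Finset.prod_le_prod
          · intro i _
            exact mul_nonneg (hβ i).le (Real.rpow_nonneg (hx_pos _).le _)
          · intro i _
            exact mul_le_mul_of_nonneg_left
              (Real.rpow_le_rpow (hx_pos _).le (hdel i) (hα i).le) (hβ i).le
        -- evaluate the right-hand product
        have hprodeq : ∏ i, β i * (L * l ^ (((t:ℤ) - (h i : ℤ) : ℤ):ℝ)) ^ (α i)
            = B * L * l ^ ((t:ℝ) - ∑ i, α i * (h i : ℝ)) := by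
          have : ∀ i : Fin (r+1), β i * (L * l ^ (((t:ℤ) - (h i : ℤ) : ℤ):ℝ)) ^ (α i)
              = β i * (L ^ (α i) * l ^ (((t:ℝ) - (h i : ℝ)) * α i)) := by
            intro i
            rw [Real.mul_rpow hL0.le (Real.rpow_pos_of_pos hl0 _).le,
              ← Real.rpow_mul hl0.le]
            push_cast
            ring_nf
          rw [Finset.prod_congr rfl (fun i _ => this i)]
          rw [Finset.prod_mul_distrib, Finset.prod_mul_distrib,
            ← Real.rpow_sum_of_pos hL0, ← Real.rpow_sum_of_pos hl0, hαsum, Real.rpow_one]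
          have hsum : ∑ i, ((t:ℝ) - (h i : ℝ)) * α i = (t:ℝ) - ∑ i, α i * (h i : ℝ) := by
            rw [Finset.sum_congr rfl (fun i _ => by ring :
              ∀ i ∈ Finset.univ, ((t:ℝ) - (h i : ℝ)) * α i = α i * (t:ℝ) - α i * (h i : ℝ))]
            rw [Finset.sum_sub_distrib, ← Finset.sum_mul, hαsum, one_mul]
          rw [hsum]; ring
        -- compare exponents
        have hHle : ∑ i, α i * (h i : ℝ) ≤ (hr:ℝ) := by
          calc ∑ i, α i * (h i : ℝ) ≤ ∑ i, α i * (hr:ℝ) :=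
              Finset.sum_le_sum fun i _ => mul_le_mul_of_nonneg_left
                (by exact_mod_cast hhle i) (hα i).le
            _ = (hr:ℝ) := by rw [← Finset.sum_mul, hαsum, one_mul]
        have hexp : l ^ ((t:ℝ) - ∑ i, α i * (h i : ℝ)) ≤ l ^ ((t:ℝ) - (hr:ℝ)) :=
          Real.rpow_le_rpow_of_exponent_ge hl0 hl1.le (by linarith)
        -- combine
        have hstep := hx t
        have hlt0 : (0:ℝ) < l ^ ((t:ℤ):ℝ) := Real.rpow_pos_of_pos hl0 _
        have hsplit : l ^ ((t:ℝ) - (hr:ℝ)) = l ^ ((t:ℤ):ℝ) * l ^ (-(hr:ℝ)) := by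
          rw [← Real.rpow_add hl0]; push_cast; ring_nf
        have h1p : (1 - p) * x (t:ℤ) ≤ (1 - p) * (L * l ^ ((t:ℤ):ℝ)) :=
          mul_le_mul_of_nonneg_left hxt (by linarith)
        have hfin : x ((t:ℤ) + 1) ≤ L * l ^ ((t:ℤ):ℝ) * l := by
          have hBL : B * L * l ^ ((t:ℝ) - ∑ i, α i * (h i : ℝ))
              ≤ B * L * (l ^ ((t:ℤ):ℝ) * l ^ (-(hr:ℝ))) := by
            rw [← hsplit]
            exact mul_le_mul_of_nonneg_left hexp (by positivity)
          have hmain : L * l ^ ((t:ℤ):ℝ) * ((1 - p) + B * l ^ (-(hr:ℝ)))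
              ≤ L * l ^ ((t:ℤ):ℝ) * l :=
            mul_le_mul_of_nonneg_left hkey (by positivity)
          nlinarith [hstep, hprod1, hprodeq, hBL, h1p]
        have hcast : ((((t:ℤ) + 1 : ℤ)):ℝ) = ((t:ℤ):ℝ) + 1 := by push_cast; ring
        have heq2 : l ^ (((t:ℤ) + 1 : ℤ):ℝ) = l ^ ((t:ℤ):ℝ) * l := by
          rw [hcast, Real.rpow_add hl0, Real.rpow_one]
        have hfin2 : x ((t:ℤ) + 1) ≤ L * l ^ (((t:ℤ) + 1 : ℤ):ℝ) := by
          rw [heq2, ← mul_assoc]; exact hfin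
        convert hfin2 using 2 <;> push_cast <;> ring
  refine ⟨L, hL0, l - 1, ⟨by linarith, by linarith⟩, fun t => ?_⟩
  have h1 : (1 : ℝ) + (l - 1) = l := by ring
  rw [h1]
  have := key t t (by omega) le_rfl
  rwa [show ((t:ℤ):ℝ) = (t:ℝ) by push_cast; ring, Real.rpow_natCast] at this
end

section
/- There is no delay function δ₋(h, ·) : [0, ∞) ∩ T̃ → T̃ on the set T̃ = (-∞, 0] ∪ [1, ∞). More precisely, there do not exist h > 0 and a strictly increasing continuous map δ : [0,∞) ∩ T̃ → T̃ such that δ(t) < t for all t ≥ 0, δ maps [0,∞) ∩ T̃ onto [δ(0), ∞) ∩ T̃, and δ preserves the scattered/dense structure: whenever t is right-scattered in [0,∞) ∩ T̃ (i.e. inf{s ∈ T̃ : s > t} > t restricted to [0,∞) ∩ T̃), δ(t) is right-scattered in [δ(0),∞) ∩ T̃. -/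
/-- There is no delay function on `T̃ = (-∞, 0] ∪ [1, ∞)` (Example 2.3). -/
theorem no_delay_function_on_Ttilde
    (T : Set ℝ) (hT : T = Set.Iic 0 ∪ Set.Ici 1) :
    ¬ ∃ (h : ℝ) (δ : ℝ → ℝ), 0 < h ∧
      StrictMonoOn δ (T ∩ Set.Ici 0) ∧
      ContinuousOn δ (T ∩ Set.Ici 0) ∧
      (∀ t ∈ T ∩ Set.Ici 0, δ t ∈ T) ∧
      (∀ t ∈ T ∩ Set.Ici 0, δ t < t) ∧
      δ '' (T ∩ Set.Ici 0) = T ∩ Set.Ici (δ 0) ∧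
      (∀ t ∈ T ∩ Set.Ici 0,
        t < sInf {s ∈ T ∩ Set.Ici 0 | t < s} →
        δ t < sInf {s ∈ T ∩ Set.Ici (δ 0) | δ t < s}) := by
  rintro ⟨h, δ, hh, hmono, hcont, hmapsto, hlt, himg, hscat⟩
  subst hT
  have h0 : (0 : ℝ) ∈ (Set.Iic 0 ∪ Set.Ici 1) ∩ Set.Ici 0 := by
    exact ⟨Or.inl (Set.mem_Iic.mpr le_rfl), Set.mem_Ici.mpr le_rfl⟩
  have hδ0 : δ 0 < 0 := hlt 0 h0
  -- 0 is right-scattered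
  have hset1 : {s ∈ (Set.Iic 0 ∪ Set.Ici 1) ∩ Set.Ici 0 | (0:ℝ) < s} = Set.Ici 1 := by
    ext s
    simp only [Set.mem_setOf_eq, Set.mem_inter_iff, Set.mem_union, Set.mem_Iic, Set.mem_Ici]
    constructor
    · rintro ⟨⟨hs | hs, _⟩, hpos⟩
      · linarith
      · exact hs
    · intro hs
      exact ⟨⟨Or.inr hs, by linarith⟩, by linarith⟩
  have hrs : (0:ℝ) < sInf {s ∈ (Set.Iic 0 ∪ Set.Ici 1) ∩ Set.Ici 0 | (0:ℝ) < s} := by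
    rw [hset1, csInf_Ici]; norm_num
  have hconc := hscat 0 h0 hrs
  -- but sInf of the right set is ≤ δ 0
  set S := {s ∈ (Set.Iic 0 ∪ Set.Ici 1) ∩ Set.Ici (δ 0) | δ 0 < s} with hS
  have hbdd : BddBelow S := ⟨δ 0, fun s hs => hs.1.2⟩
  have hmem : ∀ x, δ 0 < x → x ≤ 0 → x ∈ S := by
    intro x hx hx0
    exact ⟨⟨Or.inl hx0, le_of_lt hx⟩, hx⟩
  have hne : S.Nonempty := ⟨δ 0 / 2, hmem _ (by linarith) (by linarith)⟩
  have hle : sInf S ≤ δ 0 := by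
    rw [Real.sInf_le_iff hbdd hne]
    intro ε hε
    refine ⟨δ 0 + min ε (-δ 0) / 2, hmem _ ?_ ?_, ?_⟩
    · have := lt_min hε (by linarith : (0:ℝ) < -δ 0)
      linarith
    · have := min_le_right ε (-δ 0)
      linarith
    · have := min_le_left ε (-δ 0)
      linarith
  linarith
end
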